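/- arXiv:2401.11128 — 3 statements merged into one kernel-verified Lean document; each statement's English description precedes it below -/
import Mathlib

section
/- For every c ∈ ℂ and λ > 0, the function β ↦ (1/2)|β − c|² + λ|β| on ℂ has a unique global minimizer, and this minimizer equals S_λ(c) = (|c| − λ)₊ · c/|c| (with S_λ(0) = 0). -/
/-- The complex soft-threshold operator `S_λ(z) = (|z| − λ)₊ · z/|z|`, `S_λ(0) = 0`. -/
noncomputable def softC (lam : ℝ) (z : ℂ) : ℂ :=
  if z = 0 then 0 else (max (‖z‖ - lam) 0 / ‖z‖ : ℝ) • z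

lemma key_expand (z c : ℂ) :
    ‖z - c‖ ^ 2
      = ‖z‖ ^ 2 + ‖c‖ ^ 2 - 2 * (z * (starRingEnd ℂ) c).re := by
  rw [Complex.sq_norm, Complex.sq_norm, Complex.sq_norm, Complex.normSq_sub]

lemma re_le (z c : ℂ) : (z * (starRingEnd ℂ) c).re ≤ ‖z‖ * ‖c‖ := by
  calc (z * (starRingEnd ℂ) c).re ≤ ‖z * (starRingEnd ℂ) c‖ := Complex.re_le_norm _
    _ = ‖z‖ * ‖c‖ := by rw [norm_mul, Complex.norm_conj]

lemma eq_case (z c : ℂ) (h : (z * (starRingEnd ℂ) c).re = ‖z‖ * ‖c‖) :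
    z * (starRingEnd ℂ) c = ((‖z‖ * ‖c‖ : ℝ) : ℂ) := by
  set w := z * (starRingEnd ℂ) c with hw
  have habs : ‖w‖ = ‖z‖ * ‖c‖ := by
    rw [hw, norm_mul, Complex.norm_conj]
  have hre : w.re = ‖w‖ := by rw [habs, h]
  have him : w.im = 0 := by
    have h2 := Complex.sq_norm w
    rw [Complex.normSq_apply] at h2
    have h3 : w.im * w.im = 0 := by
      have h4 : ‖w‖ ^ 2 = w.re * w.re := by rw [← hre]; ring
      linarith
    exact mul_self_eq_zero.mp h3
  apply Complex.ext
  · simp [hre, habs]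
  · simp [him]

/-- For every `c ∈ ℂ` and `λ > 0`, the function `β ↦ (1/2)|β − c|² + λ|β|` on `ℂ` has a
unique global minimizer, which equals `S_λ(c)`. -/
theorem stmt13 (c : ℂ) (lam : ℝ) (hlam : 0 < lam) :
    ∀ β : ℂ, β ≠ softC lam c →
      (1 / 2) * ‖softC lam c - c‖ ^ 2 + lam * ‖softC lam c‖
        < (1 / 2) * ‖β - c‖ ^ 2 + lam * ‖β‖ := by
  intro β hβ
  set a := ‖c‖ with ha
  have ha0 : 0 ≤ a := norm_nonneg c
  have hb0 : 0 ≤ ‖β‖ := norm_nonneg β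
  have hre := re_le β c
  have hexp := key_expand β c
  by_cases hca : a ≤ lam
  · -- soft threshold is 0
    have hS : softC lam c = 0 := by
      unfold softC
      split_ifs with h
      · rfl
      · have : max (a - lam) 0 = 0 := max_eq_right (by linarith)
        rw [← ha, this]
        simp
    rw [hS] at hβ ⊢
    have hbpos : 0 < ‖β‖ := norm_pos_iff.mpr hβ
    simp only [zero_sub, norm_neg, norm_zero, mul_zero, add_zero]
    rw [← ha]
    nlinarith [hexp, hre, hbpos]
  · push_neg at hca
    have hc0 : c ≠ 0 := by
      intro h; rw [h, norm_zero] at ha; rw [ha] at hca; linarith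
    have hS : softC lam c = (((a - lam) / a : ℝ) : ℂ) * c := by
      unfold softC
      rw [if_neg hc0, ← ha, max_eq_left (by linarith), Complex.real_smul]
    have hapos : 0 < a := norm_pos_iff.mpr hc0
    have habsS : ‖softC lam c‖ = a - lam := by
      rw [hS, norm_mul, Complex.norm_real, Real.norm_eq_abs, ← ha, abs_of_pos (div_pos (by linarith) hapos)]
      field_simp
    have han : a ≠ 0 := hapos.ne'
    have hacc : (a : ℂ) ≠ 0 := by exact_mod_cast han
    have hSc : ‖softC lam c - c‖ = lam := by
      have h1 : softC lam c - c = ((-(lam / a) : ℝ) : ℂ) * c := by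
        rw [hS]; push_cast; field_simp; ring
      rw [h1, norm_mul, Complex.norm_real, Real.norm_eq_abs, ← ha, abs_neg, abs_of_pos (div_pos hlam hapos)]
      field_simp
    rw [habsS, hSc]
    by_cases hb : ‖β‖ = a - lam
    · -- then Re must be strictly less
      have hrelt : (β * (starRingEnd ℂ) c).re < ‖β‖ * a := by
        rcases lt_or_eq_of_le hre with h | h
        · exact h
        · exfalso
          apply hβ
          have heq := eq_case β c h
          have hcc : (starRingEnd ℂ) c ≠ 0 := by simpa using hc0
          have hmc : c * (starRingEnd ℂ) c = ((a ^ 2 : ℝ) : ℂ) := by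
            rw [Complex.mul_conj, ha, Complex.sq_norm]
          have hβc : β * (starRingEnd ℂ) c = (((a - lam) * a : ℝ) : ℂ) := by
            rw [heq, hb, ← ha]
          have hSc2 : softC lam c * (starRingEnd ℂ) c = (((a - lam) * a : ℝ) : ℂ) := by
            rw [hS, mul_assoc, hmc]
            push_cast
            field_simp
          exact mul_right_cancel₀ hcc (hβc.trans hSc2.symm)
      nlinarith [hexp, hrelt, hb]
    · nlinarith [hexp, hre, sq_pos_of_ne_zero (sub_ne_zero_of_ne hb)]
end

section
/- Let n ≥ 1, x ∈ ℂⁿ with ‖x‖₂² = n, r ∈ ℂⁿ, and λ > 0. Then the single-coordinate complex Lasso objective β ↦ (1/(2n))‖r − xβ‖₂² + λ|β| on ℂ has the unique global minimizer β̂ = S_λ(x†r / n), where x†r = Σᵢ conj(xᵢ) rᵢ. (This is the closed-form block coordinate descent update of the complex Lasso.) -/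
/-- The single-coordinate complex Lasso objective
`β ↦ (1/(2n)) ‖r − x β‖₂² + λ |β|`. -/
noncomputable def coordLassoObj (n : ℕ) (x r : Fin n → ℂ) (lam : ℝ) (β : ℂ) : ℝ :=
  (1 / (2 * (n : ℝ))) * ∑ i, ‖r i - x i * β‖ ^ 2 + lam * ‖β‖

open Complex in
lemma soft_facts (lam : ℝ) (hlam : 0 < lam) (z : ℂ) :
    ‖z - softC lam z‖ ≤ lam ∧
    (softC lam z * (starRingEnd ℂ) (z - softC lam z)).re = lam * ‖softC lam z‖ := by
  by_cases hz : z = 0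
  · simp [softC, hz, hlam.le]
  · by_cases h : ‖z‖ ≤ lam
    · have hm : max (‖z‖ - lam) 0 = 0 := max_eq_right (by linarith)
      simp [softC, hz, hm, h]
    · push_neg at h
      have ha : (0:ℝ) < ‖z‖ := hlam.trans h
      have hm : max (‖z‖ - lam) 0 = ‖z‖ - lam := max_eq_left (by linarith)
      have hb : softC lam z = (((‖z‖ - lam) / ‖z‖ : ℝ) : ℂ) * z := by
        rw [softC, if_neg hz, hm, Complex.real_smul]
      have hw : z - softC lam z = ((lam / ‖z‖ : ℝ) : ℂ) * z := by
        have hane : ((‖z‖ : ℝ) : ℂ) ≠ 0 := by exact_mod_cast ha.ne'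
        rw [hb]
        push_cast
        field_simp
        ring
      constructor
      · rw [hw, norm_mul, Complex.norm_real, Real.norm_eq_abs, abs_of_pos (by positivity)]
        rw [div_mul_cancel₀ _ ha.ne']
      · rw [hw, hb, map_mul]
        have : (((‖z‖ - lam) / ‖z‖ : ℝ) : ℂ) * z *
            ((starRingEnd ℂ) (((lam / ‖z‖ : ℝ) : ℂ)) * (starRingEnd ℂ) z)
            = (((‖z‖ - lam) / ‖z‖ : ℝ) : ℂ) *
              (((lam / ‖z‖ : ℝ) : ℂ)) * (z * (starRingEnd ℂ) z) := by
          rw [Complex.conj_ofReal]; ring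
        rw [this, Complex.mul_conj, Complex.normSq_eq_norm_sq]
        rw [norm_mul, Complex.norm_real, Real.norm_eq_abs, abs_of_pos (div_pos (by linarith) ha)]
        rw [← Complex.ofReal_mul, ← Complex.ofReal_mul, Complex.ofReal_re]
        field_simp

lemma prox_lt (lam : ℝ) (hlam : 0 < lam) (z β : ℂ) (hβ : β ≠ softC lam z) :
    1/2 * Complex.normSq (softC lam z - z) + lam * ‖softC lam z‖
      < 1/2 * Complex.normSq (β - z) + lam * ‖β‖ := by
  obtain ⟨h1, h2⟩ := soft_facts lam hlam z
  set b := softC lam z with hbdef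
  set w := z - b with hwdef
  have hid : 1/2 * Complex.normSq (β - z) - 1/2 * Complex.normSq (b - z)
      = 1/2 * Complex.normSq (β - b) - (β * (starRingEnd ℂ) w).re
        + (b * (starRingEnd ℂ) w).re := by
    simp only [hwdef, Complex.normSq_apply, Complex.sub_re, Complex.sub_im,
      Complex.mul_re, Complex.mul_im, Complex.conj_re, Complex.conj_im]
    ring
  have hre : (β * (starRingEnd ℂ) w).re ≤ lam * ‖β‖ := by
    calc (β * (starRingEnd ℂ) w).re ≤ ‖β * (starRingEnd ℂ) w‖ :=
          Complex.re_le_norm _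
      _ = ‖β‖ * ‖w‖ := by rw [norm_mul, Complex.norm_conj]
      _ ≤ ‖β‖ * lam := by
          exact mul_le_mul_of_nonneg_left h1 (norm_nonneg _)
      _ = lam * ‖β‖ := mul_comm _ _
  have hpos : 0 < Complex.normSq (β - b) := by
    rw [Complex.normSq_pos]
    exact sub_ne_zero.mpr hβ
  nlinarith [hid, hre, h2, hpos]


/-- Let `x ∈ ℂⁿ` with `‖x‖₂² = n`, `r ∈ ℂⁿ`, `λ > 0`. The single-coordinate complex
Lasso objective has the unique global minimizer `β̂ = S_λ(x†r/n)`: this is the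
closed-form block coordinate descent update of the complex Lasso. -/
theorem stmt14 (n : ℕ) (hn : 1 ≤ n) (x r : Fin n → ℂ)
    (hx : ∑ i, ‖x i‖ ^ 2 = (n : ℝ)) (lam : ℝ) (hlam : 0 < lam) :
    ∀ β : ℂ, β ≠ softC lam ((∑ i, starRingEnd ℂ (x i) * r i) / (n : ℂ)) →
      coordLassoObj n x r lam (softC lam ((∑ i, starRingEnd ℂ (x i) * r i) / (n : ℂ)))
        < coordLassoObj n x r lam β := by
  intro β hβ
  set S := ∑ i, starRingEnd ℂ (x i) * r i with hS
  set z := S / (n : ℂ) with hz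
  have hn0 : (0:ℝ) < (n:ℝ) := by exact_mod_cast hn
  have hnC : (n:ℂ) ≠ 0 := by exact_mod_cast hn0.ne'
  have hSz : S = (n:ℂ) * z := by rw [hz]; field_simp
  have hterm : ∀ γ : ℂ, ∀ i : Fin n, ‖r i - x i * γ‖ ^ 2 =
      Complex.normSq (r i) + Complex.normSq (x i) * Complex.normSq γ
        - 2 * ((starRingEnd ℂ (x i) * r i) * (starRingEnd ℂ) γ).re := by
    intro γ i
    rw [Complex.sq_norm]
    simp only [Complex.normSq_apply, Complex.sub_re, Complex.sub_im, Complex.mul_re,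
      Complex.mul_im, Complex.conj_re, Complex.conj_im]
    ring
  have hx' : ∑ i, Complex.normSq (x i) = (n:ℝ) := by
    rw [← hx]; exact Finset.sum_congr rfl fun i _ => (Complex.sq_norm _).symm
  have hsum : ∀ γ : ℂ, ∑ i, ‖r i - x i * γ‖ ^ 2 =
      (∑ i, Complex.normSq (r i)) + (n:ℝ) * Complex.normSq γ
        - 2 * ((n:ℝ) * (z * (starRingEnd ℂ) γ).re) := by
    intro γ
    have h1 : ∑ i, ((starRingEnd ℂ (x i) * r i) * (starRingEnd ℂ) γ).re
        = (S * (starRingEnd ℂ) γ).re := by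
      rw [hS, Finset.sum_mul, Complex.re_sum]
    have h2 : (S * (starRingEnd ℂ) γ).re = (n:ℝ) * (z * (starRingEnd ℂ) γ).re := by
      have : S * (starRingEnd ℂ) γ = (n:ℂ) * (z * (starRingEnd ℂ) γ) := by
        rw [hSz]; ring
      rw [this, Complex.mul_re]
      simp
    calc ∑ i, ‖r i - x i * γ‖ ^ 2
        = ∑ i, (Complex.normSq (r i) + Complex.normSq (x i) * Complex.normSq γ
            - 2 * ((starRingEnd ℂ (x i) * r i) * (starRingEnd ℂ) γ).re) :=
          Finset.sum_congr rfl fun i _ => hterm γ i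
      _ = (∑ i, Complex.normSq (r i)) + (∑ i, Complex.normSq (x i)) * Complex.normSq γ
            - 2 * ∑ i, ((starRingEnd ℂ (x i) * r i) * (starRingEnd ℂ) γ).re := by
          rw [Finset.sum_sub_distrib, Finset.sum_add_distrib, ← Finset.sum_mul,
            ← Finset.mul_sum]
      _ = _ := by rw [hx', h1, h2]
  have hobj : ∀ γ : ℂ, coordLassoObj n x r lam γ
      = 1/2 * Complex.normSq (γ - z) + lam * ‖γ‖
        + ((1/(2*(n:ℝ))) * (∑ i, Complex.normSq (r i)) - 1/2 * Complex.normSq z) := by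
    intro γ
    have hq : Complex.normSq (γ - z) = Complex.normSq γ
        - 2 * (z * (starRingEnd ℂ) γ).re + Complex.normSq z := by
      simp only [Complex.normSq_apply, Complex.sub_re, Complex.sub_im, Complex.mul_re,
        Complex.mul_im, Complex.conj_re, Complex.conj_im]
      ring
    rw [coordLassoObj, hsum γ, hq]
    field_simp
    ring
  rw [hobj β, hobj (softC lam z)]
  have := prox_lt lam hlam z β hβ
  linarith
end

section
/- Let Θ* be a p×p Hermitian positive definite complex matrix, set κ_f = ‖(Θ*)⁻¹‖_∞ (maximum over rows of the sum of moduli of entries), and let d ≥ 1. Let G be a p×p Hermitian complex matrix such that each row of G has at most d nonzero entries and ‖G‖_max ≤ 1/(3 κ_f d). Then Θ* + G is invertible, and the remainder R(G) = (Θ* + G)⁻¹ − (Θ*)⁻¹ + (Θ*)⁻¹ G (Θ*)⁻¹ of the first-order Taylor expansion of the matrix inverse satisfies ‖R(G)‖_max ≤ (3/2) d ‖G‖_max² κ_f³. -/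
open Matrix ComplexOrder

section
attribute [local instance] Matrix.linftyOpNormedRing
set_option maxHeartbeats 2000000 in

/-- Control of the remainder of the first-order Taylor expansion of the matrix inverse.
`Θ*` is Hermitian positive definite, `κ_f = ‖(Θ*)⁻¹‖_∞` (the maximum absolute row sum of
the inverse), and `G` is a Hermitian perturbation with at most `d` nonzero entries per
row and `‖G‖_max ≤ 1/(3 κ_f d)`. Then `Θ* + G` is invertible and the Taylor remainder
`R(G) = (Θ*+G)⁻¹ − (Θ*)⁻¹ + (Θ*)⁻¹ G (Θ*)⁻¹` satisfies
`‖R(G)‖_max ≤ (3/2) d ‖G‖_max² κ_f³`. -/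
theorem stmt18 (p d : ℕ) (hp : 0 < p) (hd : 1 ≤ d)
    (Θs : Matrix (Fin p) (Fin p) ℂ) (hΘs : Θs.PosDef)
    (κf : ℝ)
    (hκf : IsGreatest {r : ℝ | ∃ k : Fin p, r = ∑ l, ‖Θs⁻¹ k l‖} κf)
    (G : Matrix (Fin p) (Fin p) ℂ) (hG : G.IsHermitian)
    (hGrow : ∀ k : Fin p, (Finset.univ.filter fun l => G k l ≠ 0).card ≤ d)
    (gmax : ℝ)
    (hgmax : IsGreatest {r : ℝ | ∃ k l : Fin p, r = ‖G k l‖} gmax)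
    (hGsmall : gmax ≤ 1 / (3 * κf * (d : ℝ))) :
    IsUnit (Θs + G) ∧
    ∀ k l, ‖((Θs + G)⁻¹ - Θs⁻¹ + Θs⁻¹ * G * Θs⁻¹) k l‖
      ≤ (3 / 2) * (d : ℝ) * gmax ^ 2 * κf ^ 3 := by
  classical
  haveI : Nonempty (Fin p) := ⟨⟨0, hp⟩⟩
  -- basic facts about Θs
  have hdetA : IsUnit Θs.det := (Matrix.isUnit_iff_isUnit_det _).mp hΘs.isUnit
  have hA1 : Θs * Θs⁻¹ = 1 := Matrix.mul_nonsing_inv _ hdetA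
  have hA2 : Θs⁻¹ * Θs = 1 := Matrix.nonsing_inv_mul _ hdetA
  -- gmax nonneg, entry bound
  have hgnn : 0 ≤ gmax := by
    obtain ⟨k, l, hkl⟩ := hgmax.1
    rw [hkl]; exact norm_nonneg _
  have hGentry : ∀ k l, ‖G k l‖ ≤ gmax := fun k l => hgmax.2 ⟨k, l, rfl⟩
  -- κf positive
  have hκpos : 0 < κf := by
    obtain ⟨k, hk⟩ := hκf.1
    have h1 : (Θs⁻¹ * Θs) k k = 1 := by rw [hA2]; simp [Matrix.one_apply]
    rw [Matrix.mul_apply] at h1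
    have hex : ∃ l, Θs⁻¹ k l ≠ 0 := by
      by_contra h
      push_neg at h
      simp only [h, zero_mul, Finset.sum_const_zero] at h1
      exact one_ne_zero h1.symm
    obtain ⟨l, hl⟩ := hex
    have : (0 : ℝ) < ‖Θs⁻¹ k l‖ := by
      exact norm_pos_iff.mpr hl
    calc (0:ℝ) < ‖Θs⁻¹ k l‖ := this
      _ ≤ ∑ m, ‖Θs⁻¹ k m‖ :=
        Finset.single_le_sum (f := fun m => ‖Θs⁻¹ k m‖)
          (fun m _ => norm_nonneg _) (Finset.mem_univ l)
      _ = κf := hk.symm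
  -- row sums vs linfty operator norm
  have rowsum_le : ∀ (M : Matrix (Fin p) (Fin p) ℂ) (k : Fin p),
      ∑ l, ‖M k l‖ ≤ ‖M‖ := by
    intro M k
    rw [Matrix.linfty_opNorm_def]
    have h := Finset.le_sup (f := fun i : Fin p => ∑ j, ‖M i j‖₊) (Finset.mem_univ k)
    calc ∑ l, ‖M k l‖ = ((∑ j, ‖M k j‖₊ : NNReal) : ℝ) := by
          push_cast
          simp
      _ ≤ _ := by exact_mod_cast h
  have norm_le_of_rowsums : ∀ (M : Matrix (Fin p) (Fin p) ℂ) (c : ℝ),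
      (∀ k, ∑ l, ‖M k l‖ ≤ c) → ‖M‖ ≤ c := by
    intro M c hc
    obtain ⟨k₀, _, hk₀⟩ := Finset.exists_mem_eq_sup Finset.univ Finset.univ_nonempty
      (fun i : Fin p => ∑ j, ‖M i j‖₊)
    rw [Matrix.linfty_opNorm_def, hk₀]
    calc ((∑ j, ‖M k₀ j‖₊ : NNReal) : ℝ) = ∑ j, ‖M k₀ j‖ := by
          push_cast
          simp
      _ ≤ c := hc k₀
  -- norm bounds
  have hAinorm : ‖Θs⁻¹‖ ≤ κf := norm_le_of_rowsums _ _ (fun k => hκf.2 ⟨k, rfl⟩)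
  have hGnorm : ‖G‖ ≤ (d : ℝ) * gmax := by
    refine norm_le_of_rowsums _ _ (fun k => ?_)
    calc ∑ l, ‖G k l‖
        = ∑ l ∈ Finset.univ.filter (fun l => G k l ≠ 0), ‖G k l‖ := by
          refine (Finset.sum_subset (Finset.filter_subset _ _) ?_).symm
          intro x _ hx
          simp only [Finset.mem_filter, Finset.mem_univ, true_and, not_not] at hx
          simp [hx]
      _ ≤ (Finset.univ.filter (fun l => G k l ≠ 0)).card • gmax :=
          Finset.sum_le_card_nsmul _ _ _ (fun x _ => hGentry k x)
      _ ≤ (d : ℝ) * gmax := by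
          rw [nsmul_eq_mul]
          exact mul_le_mul_of_nonneg_right (by exact_mod_cast hGrow k) hgnn
  have hdpos : (0:ℝ) < d := by exact_mod_cast hd
  have hdgk : κf * ((d : ℝ) * gmax) ≤ 1 / 3 := by
    have h := mul_le_mul_of_nonneg_left hGsmall (le_of_lt (mul_pos hκpos hdpos))
    have : κf * (d:ℝ) * (1 / (3 * κf * (d:ℝ))) = 1/3 := by
      field_simp
    nlinarith [hκpos, hdpos]
  set N : Matrix (Fin p) (Fin p) ℂ := Θs⁻¹ * G with hNdef
  have hNnorm : ‖N‖ ≤ 1 / 3 := by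
    calc ‖N‖ ≤ ‖Θs⁻¹‖ * ‖G‖ := norm_mul_le _ _
      _ ≤ κf * ((d:ℝ) * gmax) := by
          apply mul_le_mul hAinorm hGnorm (norm_nonneg _) (le_of_lt hκpos)
      _ ≤ 1 / 3 := hdgk
  -- invertibility of 1 + N
  have hdet1N : (1 + N).det ≠ 0 := by
    intro h
    obtain ⟨v, hvne, hv⟩ := (Matrix.exists_mulVec_eq_zero_iff).mpr h
    have hv' : v + N *ᵥ v = 0 := by
      rw [Matrix.add_mulVec, Matrix.one_mulVec] at hv
      exact hv
    have hveq : v = -(N *ᵥ v) := by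
      rw [eq_neg_iff_add_eq_zero]; exact hv'
    have h1 : ‖v‖ = ‖N *ᵥ v‖ := by
      have := congrArg (fun w => ‖w‖) hveq
      simpa [norm_neg] using this
    have h2 : ‖N *ᵥ v‖ ≤ ‖N‖ * ‖v‖ := Matrix.linfty_opNorm_mulVec _ _
    have hvpos : 0 < ‖v‖ := norm_pos_iff.mpr hvne
    nlinarith [hNnorm]
  have hfact : Θs + G = Θs * (1 + N) := by
    rw [mul_add, mul_one, hNdef, ← Matrix.mul_assoc, hA1, Matrix.one_mul]
  have hdetS : (Θs + G).det ≠ 0 := by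
    rw [hfact, Matrix.det_mul]
    exact mul_ne_zero (hdetA.ne_zero) hdet1N
  have hSunit : IsUnit (Θs + G) := (Matrix.isUnit_iff_isUnit_det _).mpr
    (isUnit_iff_ne_zero.mpr hdetS)
  refine ⟨hSunit, ?_⟩
  have hdetSunit : IsUnit (Θs + G).det := isUnit_iff_ne_zero.mpr hdetS
  set B : Matrix (Fin p) (Fin p) ℂ := (Θs + G)⁻¹ with hBdef
  have hB1 : (Θs + G) * B = 1 := Matrix.mul_nonsing_inv _ hdetSunit
  have hB2 : B * (Θs + G) = 1 := Matrix.nonsing_inv_mul _ hdetSunit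
  set C : Matrix (Fin p) (Fin p) ℂ := (1 + N)⁻¹ with hCdef
  have hC1 : (1 + N) * C = 1 := Matrix.mul_nonsing_inv _ (isUnit_iff_ne_zero.mpr hdet1N)
  have hBC : B = C * Θs⁻¹ := by
    rw [hBdef, hfact, Matrix.mul_inv_rev]
  -- bound on ‖C‖
  have hCeq : C = 1 - N * C := by
    have h : C + N * C = 1 := by
      have := hC1
      rwa [add_mul, one_mul] at this
    rw [eq_sub_iff_add_eq]
    exact h
  have hCnorm : ‖C‖ ≤ 3 / 2 := by
    have h0 : ‖C‖ = ‖1 - N * C‖ := congrArg norm hCeq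
    have h1 : ‖C‖ ≤ ‖(1 : Matrix (Fin p) (Fin p) ℂ)‖ + ‖N * C‖ := by
      rw [h0]
      exact norm_sub_le (1 : Matrix (Fin p) (Fin p) ℂ) (N * C)
    have h2 : ‖N * C‖ ≤ ‖N‖ * ‖C‖ := norm_mul_le _ _
    have h3 : ‖(1 : Matrix (Fin p) (Fin p) ℂ)‖ ≤ 1 := by
      refine norm_le_of_rowsums _ _ (fun k => ?_)
      have : ∀ l, ‖(1 : Matrix (Fin p) (Fin p) ℂ) k l‖
          = if k = l then 1 else 0 := by
        intro l
        by_cases h : k = l <;> simp [Matrix.one_apply, h]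
      simp [this]
    have h4 : ‖N‖ * ‖C‖ ≤ (1/3) * ‖C‖ :=
      mul_le_mul_of_nonneg_right hNnorm (norm_nonneg _)
    nlinarith [norm_nonneg C]
  have hBnorm : ‖B‖ ≤ 3 / 2 * κf := by
    calc ‖B‖ = ‖C * Θs⁻¹‖ := by rw [hBC]
      _ ≤ ‖C‖ * ‖Θs⁻¹‖ := norm_mul_le _ _
      _ ≤ (3/2) * κf := by
          apply mul_le_mul hCnorm hAinorm (norm_nonneg _) (by norm_num)
  -- remainder identity
  have h1 : Θs⁻¹ * G * B = Θs⁻¹ - B := by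
    have e : Θs⁻¹ * G * B = Θs⁻¹ * ((Θs + G) * B) - Θs⁻¹ * Θs * B := by
      noncomm_ring
    rw [e, hB1, hA2, Matrix.mul_one, Matrix.one_mul]
  have h2 : B * G * Θs⁻¹ = Θs⁻¹ - B := by
    have e : B * G * Θs⁻¹ = B * (Θs + G) * Θs⁻¹ - B * (Θs * Θs⁻¹) := by
      noncomm_ring
    rw [e, hB2, hA1, Matrix.mul_one, Matrix.one_mul]
  have hRid : B - Θs⁻¹ + Θs⁻¹ * G * Θs⁻¹ = (Θs⁻¹ * G) * (B * G * Θs⁻¹) := by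
    calc B - Θs⁻¹ + Θs⁻¹ * G * Θs⁻¹
        = Θs⁻¹ * G * Θs⁻¹ - (Θs⁻¹ - B) := by noncomm_ring
      _ = Θs⁻¹ * G * Θs⁻¹ - B * G * Θs⁻¹ := by rw [h2]
      _ = (Θs⁻¹ - B) * G * Θs⁻¹ := by noncomm_ring
      _ = (Θs⁻¹ * G * B) * G * Θs⁻¹ := by rw [h1]
      _ = (Θs⁻¹ * G) * (B * G * Θs⁻¹) := by noncomm_ring
  -- Hermitian facts
  have hAiH : Θs⁻¹ᴴ = Θs⁻¹ := hΘs.isHermitian.inv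
  have hSH : (Θs + G)ᴴ = Θs + G := hΘs.isHermitian.add hG
  have hBH : Bᴴ = B := (Matrix.IsHermitian.inv hSH : _)
  have hconjeq : (B * G * Θs⁻¹)ᴴ = Θs⁻¹ * G * B := by
    rw [Matrix.conjTranspose_mul, Matrix.conjTranspose_mul, hAiH, hG, hBH,
      Matrix.mul_assoc]
  have habs : ∀ j l, ‖(B * G * Θs⁻¹) j l‖
      = ‖(Θs⁻¹ * G * B) l j‖ := by
    intro j l
    have h := congrFun (congrFun hconjeq l) j
    rw [Matrix.conjTranspose_apply] at h
    rw [← h, norm_star]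
  -- entrywise bound on Θs⁻¹ * G
  have hAiGmax : ∀ k j, ‖(Θs⁻¹ * G) k j‖ ≤ κf * gmax := by
    intro k j
    rw [Matrix.mul_apply]
    calc ‖∑ m, Θs⁻¹ k m * G m j‖
        ≤ ∑ m, ‖Θs⁻¹ k m * G m j‖ := norm_sum_le _ _
      _ = ∑ m, ‖Θs⁻¹ k m‖ * ‖G m j‖ := by
          simp [norm_mul]
      _ ≤ ∑ m, ‖Θs⁻¹ k m‖ * gmax :=
          Finset.sum_le_sum (fun m _ =>
            mul_le_mul_of_nonneg_left (hGentry m j) (norm_nonneg _))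
      _ = (∑ m, ‖Θs⁻¹ k m‖) * gmax := by rw [Finset.sum_mul]
      _ ≤ κf * gmax := mul_le_mul_of_nonneg_right (hκf.2 ⟨k, rfl⟩) hgnn
  -- column sum bound on B * G * Θs⁻¹
  have hAiGBnorm : ‖Θs⁻¹ * G * B‖ ≤ κf * ((d:ℝ) * gmax) * (3/2 * κf) := by
    calc ‖Θs⁻¹ * G * B‖ ≤ ‖Θs⁻¹ * G‖ * ‖B‖ := norm_mul_le _ _
      _ ≤ (‖Θs⁻¹‖ * ‖G‖) * ‖B‖ :=
          mul_le_mul_of_nonneg_right (norm_mul_le _ _) (norm_nonneg _)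
      _ ≤ (κf * ((d:ℝ) * gmax)) * (3/2 * κf) := by
          apply mul_le_mul _ hBnorm (norm_nonneg _)
          · positivity
          · exact mul_le_mul hAinorm hGnorm (norm_nonneg _) (le_of_lt hκpos)
  have hcolsum : ∀ l, ∑ j, ‖(B * G * Θs⁻¹) j l‖
      ≤ κf * ((d:ℝ) * gmax) * (3/2 * κf) := by
    intro l
    calc ∑ j, ‖(B * G * Θs⁻¹) j l‖
        = ∑ j, ‖(Θs⁻¹ * G * B) l j‖ := by
          exact Finset.sum_congr rfl (fun j _ => habs j l)
      _ ≤ ‖Θs⁻¹ * G * B‖ := rowsum_le _ l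
      _ ≤ κf * ((d:ℝ) * gmax) * (3/2 * κf) := hAiGBnorm
  -- final bound
  intro k l
  have hgoalmat : (Θs + G)⁻¹ - Θs⁻¹ + Θs⁻¹ * G * Θs⁻¹
      = (Θs⁻¹ * G) * (B * G * Θs⁻¹) := by
    rw [← hRid, hBdef]
  rw [hgoalmat, Matrix.mul_apply]
  have hκgnn : 0 ≤ κf * gmax := mul_nonneg (le_of_lt hκpos) hgnn
  calc ‖∑ j, (Θs⁻¹ * G) k j * (B * G * Θs⁻¹) j l‖
      ≤ ∑ j, ‖(Θs⁻¹ * G) k j * (B * G * Θs⁻¹) j l‖ :=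
        norm_sum_le _ _
    _ = ∑ j, ‖(Θs⁻¹ * G) k j‖ * ‖(B * G * Θs⁻¹) j l‖ := by
        simp [norm_mul]
    _ ≤ ∑ j, (κf * gmax) * ‖(B * G * Θs⁻¹) j l‖ :=
        Finset.sum_le_sum (fun j _ =>
          mul_le_mul_of_nonneg_right (hAiGmax k j) (norm_nonneg _))
    _ = (κf * gmax) * ∑ j, ‖(B * G * Θs⁻¹) j l‖ := by
        rw [Finset.mul_sum]
    _ ≤ (κf * gmax) * (κf * ((d:ℝ) * gmax) * (3/2 * κf)) :=
        mul_le_mul_of_nonneg_left (hcolsum l) hκgnn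
    _ = (3 / 2) * (d : ℝ) * gmax ^ 2 * κf ^ 3 := by ring

end
end
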